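/- Let M, L, K be positive integers with corresponding index sets [M], [L], [K], let δ be a real number with 0 < δ ≤ 1/2, and let c_{b,l}^{(k)} ∈ [0,1] be real numbers for b ∈ [M], l ∈ [L], k ∈ [K]. Let 𝒜 be the set of all partial functions σ assigning to each b ∈ [M] at most one line σ(b) ∈ [L], such that (i) for every b in the domain of σ and every k ∈ [K], there exists some k' ∈ [K] with c_{b,σ(b)}^{(k')} > δ, and (ii) for every k ∈ [K], the sum of c_{b,σ(b)}^{(k)} over all b in the domain of σ is at most 1. Then the cardinality of 𝒜 satisfies |𝒜| ≤ (K/δ) · (M·L)^{K/δ}, where the exponent K/δ is a real exponent. -/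

import Mathlib

/-- Geometric sum bound: for `2 ≤ N`, `∑_{j < s} N^j ≤ N^s`. -/
lemma aux_geom_sum_le (N : ℕ) (hN : 2 ≤ N) : ∀ s : ℕ, ∑ j ∈ Finset.range s, N ^ j ≤ N ^ s := by
  intro s
  induction s with
  | zero => simp
  | succ s ih =>
      rw [Finset.sum_range_succ, pow_succ]
      have : N ^ s * 2 ≤ N ^ s * N := Nat.mul_le_mul_left _ hN
      omega

theorem stmt_14 (M L K : ℕ) (hM : 0 < M) (hL : 0 < L) (hK : 0 < K)
    (δ : ℝ) (hδ0 : 0 < δ) (hδ : δ ≤ 1 / 2)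
    (c : Fin M → Fin L → Fin K → ℝ)
    (hc : ∀ b l k, 0 ≤ c b l k ∧ c b l k ≤ 1)
    (𝒜 : Set (Fin M → Option (Fin L)))
    (h𝒜 : 𝒜 = {σ | (∀ b l, σ b = some l → ∃ k, δ < c b l k) ∧
      (∀ k, (∑ b, (Option.elim (σ b) 0 fun l => c b l k)) ≤ 1)}) :
    (𝒜.ncard : ℝ) ≤ (K / δ) * ((M : ℝ) * L) ^ ((K : ℝ) / δ) := by
  classical
  set t : ℝ := (K : ℝ) / δ with ht
  have ht2 : (2 : ℝ) ≤ t := by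
    rw [ht, le_div_iff₀ hδ0]
    have : (1 : ℝ) ≤ (K : ℝ) := by exact_mod_cast hK
    nlinarith
  set s : ℕ := ⌊t⌋₊ with hs
  set N : ℕ := M * L with hN
  have hNpos : 0 < N := Nat.mul_pos hM hL
  have hN1 : (1 : ℝ) ≤ (N : ℝ) := by exact_mod_cast hNpos
  -- the injection into finsets of pairs
  set F : (Fin M → Option (Fin L)) → Finset (Fin M × Fin L) :=
    fun σ => Finset.univ.filter (fun p => σ p.1 = some p.2) with hF
  have hFinj : Function.Injective F := by
    intro σ σ' h
    funext b
    have key : ∀ l, σ b = some l ↔ σ' b = some l := by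
      intro l
      constructor <;> intro hb
      · have : (b, l) ∈ F σ := by simp [hF, hb]
        rw [h] at this
        simpa [hF] using this
      · have : (b, l) ∈ F σ' := by simp [hF, hb]
        rw [← h] at this
        simpa [hF] using this
    cases hb : σ b with
    | none =>
        cases hb' : σ' b with
        | none => rfl
        | some l => exact absurd ((key l).mpr hb') (by simp [hb])
    | some l => exact ((key l).mp hb).symm
  -- sum identity
  have hsum : ∀ (σ : Fin M → Option (Fin L)) (k : Fin K),
      ∑ p ∈ F σ, c p.1 p.2 k = ∑ b, Option.elim (σ b) 0 fun l => c b l k := by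
    intro σ k
    rw [hF]
    rw [Finset.sum_filter, Fintype.sum_prod_type]
    refine Finset.sum_congr rfl fun b _ => ?_
    cases hb : σ b with
    | none => simp [hb]
    | some l => simp [hb]
  -- support bound
  have hcard : ∀ σ ∈ 𝒜, (F σ).card ≤ s := by
    intro σ hσ
    rw [h𝒜] at hσ
    obtain ⟨h1, h2⟩ := hσ
    have hstep : δ * (F σ).card ≤ (K : ℝ) := by
      have e1 : δ * (F σ).card = ∑ _p ∈ F σ, δ := by
        rw [Finset.sum_const, nsmul_eq_mul, mul_comm]
      have e2 : ∑ p ∈ F σ, δ ≤ ∑ p ∈ F σ, ∑ k, c p.1 p.2 k := by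
        refine Finset.sum_le_sum fun p hp => ?_
        have hp' : σ p.1 = some p.2 := by simpa [hF] using hp
        obtain ⟨k, hk⟩ := h1 p.1 p.2 hp'
        calc δ ≤ c p.1 p.2 k := le_of_lt hk
          _ ≤ ∑ k', c p.1 p.2 k' :=
            Finset.single_le_sum (fun k' _ => (hc p.1 p.2 k').1) (Finset.mem_univ k)
      have e3 : ∑ p ∈ F σ, ∑ k, c p.1 p.2 k ≤ (K : ℝ) := by
        rw [Finset.sum_comm]
        calc ∑ k, ∑ p ∈ F σ, c p.1 p.2 k = ∑ k : Fin K, ∑ b, Option.elim (σ b) 0 fun l => c b l k := by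
              exact Finset.sum_congr rfl fun k _ => hsum σ k
          _ ≤ ∑ _k : Fin K, (1 : ℝ) := Finset.sum_le_sum fun k _ => h2 k
          _ = (K : ℝ) := by simp
      linarith
    have : ((F σ).card : ℝ) ≤ t := by
      rw [ht, le_div_iff₀ hδ0]
      linarith [hstep]
    exact Nat.le_floor this
  -- counting
  have hfin : 𝒜.Finite := Set.toFinite _
  set B : Finset (Finset (Fin M × Fin L)) :=
    Finset.univ.filter (fun S => S.card ≤ s) with hB
  have hcount : 𝒜.ncard ≤ B.card := by
    rw [Set.ncard_eq_toFinset_card 𝒜 hfin]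
    refine Finset.card_le_card_of_injOn F ?_ ?_
    · intro σ hσ
      rw [Finset.mem_coe, Set.Finite.mem_toFinset] at hσ
      simp only [hB, Finset.mem_coe, Finset.mem_filter, Finset.mem_univ, true_and]
      exact hcard σ hσ
    · exact fun a _ b _ h => hFinj h
  -- bound B.card
  have hBsub : B ⊆ (Finset.range (s + 1)).biUnion
      (fun j => Finset.powersetCard j (Finset.univ : Finset (Fin M × Fin L))) := by
    intro S hS
    simp only [hB, Finset.mem_filter, Finset.mem_univ, true_and] at hS
    rw [Finset.mem_biUnion]
    exact ⟨S.card, Finset.mem_range.mpr (by omega),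
      Finset.mem_powersetCard.mpr ⟨Finset.subset_univ S, rfl⟩⟩
  have hBcard : B.card ≤ ∑ j ∈ Finset.range (s + 1), N ^ j := by
    calc B.card ≤ ((Finset.range (s + 1)).biUnion
        (fun j => Finset.powersetCard j (Finset.univ : Finset (Fin M × Fin L)))).card :=
          Finset.card_le_card hBsub
      _ ≤ ∑ j ∈ Finset.range (s + 1), (Finset.powersetCard j
            (Finset.univ : Finset (Fin M × Fin L))).card := Finset.card_biUnion_le
      _ ≤ ∑ j ∈ Finset.range (s + 1), N ^ j := by
          refine Finset.sum_le_sum fun j _ => ?_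
          rw [Finset.card_powersetCard]
          have : (Finset.univ : Finset (Fin M × Fin L)).card = N := by
            simp [hN]
          rw [this]
          exact Nat.choose_le_pow N j
  -- finish over ℝ
  have ht0 : (0 : ℝ) ≤ t := by linarith
  have hsle : (s : ℝ) ≤ t := Nat.floor_le ht0
  have hgoalN : ((M : ℝ) * L) = (N : ℝ) := by rw [hN]; push_cast; ring
  rw [hgoalN]
  by_cases hN2 : 2 ≤ N
  · have hnat : 𝒜.ncard ≤ 2 * N ^ s := by
      have hg := aux_geom_sum_le N hN2 s
      have hsum' : ∑ j ∈ Finset.range (s + 1), N ^ j ≤ 2 * N ^ s := by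
        rw [Finset.sum_range_succ]; omega
      omega
    have h1 : (𝒜.ncard : ℝ) ≤ 2 * (N : ℝ) ^ (s : ℕ) := by exact_mod_cast hnat
    have hrpow : ((N : ℝ)) ^ (s : ℕ) ≤ (N : ℝ) ^ t := by
      rw [← Real.rpow_natCast (N : ℝ) s]
      exact Real.rpow_le_rpow_of_exponent_le hN1 hsle
    have hpos : (0 : ℝ) ≤ (N : ℝ) ^ (s : ℕ) := by positivity
    calc (𝒜.ncard : ℝ) ≤ 2 * (N : ℝ) ^ (s : ℕ) := h1
      _ ≤ t * (N : ℝ) ^ t := mul_le_mul ht2 hrpow hpos ht0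
  · have hN1' : N = 1 := by omega
    have hBle : B.card ≤ 2 := by
      have h1 : B.card ≤ Fintype.card (Finset (Fin M × Fin L)) := Finset.card_le_univ B
      have h2 : Fintype.card (Finset (Fin M × Fin L)) = 2 ^ N := by
        rw [Fintype.card_finset]
        simp [hN]
      rw [h2, hN1'] at h1
      simpa using h1
    have hle2 : (𝒜.ncard : ℝ) ≤ 2 := by
      have : 𝒜.ncard ≤ 2 := le_trans hcount hBle
      exact_mod_cast this
    rw [hN1']
    simp only [Nat.cast_one, Real.one_rpow, mul_one]
    linarith
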